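/- In the presented group G = ⟨a, b ∣ a² = b²⟩ (the fundamental group of the Klein bottle), the images of the generators satisfy a² = b² but a ≠ b. Hence G is not Frobenius injective: the Frobenius map x ↦ x² on G is not injective. -/
import Mathlib


/-- The single relation `a² = b²` defining the fundamental group of the Klein bottle,
as an element of the free group on two generators (`true` plays the role of `a`,
`false` that of `b`). -/
def kleinBottleRels : Set (FreeGroup Bool) :=
  {FreeGroup.of true ^ 2 * (FreeGroup.of false ^ 2)⁻¹}

private def kbF : Bool → Multiplicative (ZMod 2) :=
  fun x => if x then Multiplicative.ofAdd 1 else 1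

private lemma kbF_rels : ∀ r ∈ kleinBottleRels, FreeGroup.lift kbF r = 1 := by
  intro r hr
  rcases hr with rfl
  simp [kbF]
  decide

/-- In the group `G = ⟨a, b ∣ a² = b²⟩`, the images of the generators satisfy
`a² = b²` but `a ≠ b`; hence the Frobenius map `x ↦ x²` on `G` is not injective,
i.e. `G` is not Frobenius injective. -/
theorem kleinBottleGroup_not_frobenius_injective :
    (PresentedGroup.of (rels := kleinBottleRels) true) ^ 2 =
      (PresentedGroup.of (rels := kleinBottleRels) false) ^ 2 ∧
    PresentedGroup.of (rels := kleinBottleRels) true ≠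
      PresentedGroup.of (rels := kleinBottleRels) false ∧
    ¬ Function.Injective (fun x : PresentedGroup kleinBottleRels => x ^ 2) := by
  have hsq : (PresentedGroup.of (rels := kleinBottleRels) true) ^ 2 =
      (PresentedGroup.of (rels := kleinBottleRels) false) ^ 2 := by
    have : QuotientGroup.mk' (Subgroup.normalClosure kleinBottleRels)
        (FreeGroup.of true ^ 2 * (FreeGroup.of false ^ 2)⁻¹) = 1 := by
      apply (QuotientGroup.eq_one_iff _).mpr
      exact Subgroup.subset_normalClosure rfl
    rw [map_mul, map_inv, mul_inv_eq_one, map_pow, map_pow] at this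
    exact this
  have hne : PresentedGroup.of (rels := kleinBottleRels) true ≠
      PresentedGroup.of (rels := kleinBottleRels) false := by
    intro h
    have := congrArg (PresentedGroup.toGroup kbF_rels) h
    rw [PresentedGroup.toGroup.of, PresentedGroup.toGroup.of] at this
    exact (by decide : kbF true ≠ kbF false) this
  exact ⟨hsq, hne, fun h => hne (h hsq)⟩
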